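/- For a linear endomorphism f of a finite-dimensional inner product space with components f^{ij} = ⟨e^i, f(e^j)⟩ in a basis, the multivector 𝐟 = Σ_i e^i f(e_i) (geometric product) is independent of the choice of basis, and equals tr(f) + rot(f), where tr(f) = Σ_i ⟨e^i, f(e_i)⟩ and rot(f) = Σ_i e^i ∧ f(e_i). -/
import Mathlib


open CliffordAlgebra

/-- For a linear endomorphism `f` of a space with nondegenerate symmetric
bilinear form `g` (with `g(a,b) = ½ polar Q a b`, so `ab = g(a,b) + a∧b` in the
Clifford algebra), the multivector `𝐟 = Σ_i e^i f(e_i)` (geometric product) is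
independent of the choice of frame, and equals `tr(f) + rot(f)` with
`tr(f) = Σ_i g(e^i, f(e_i))` and `rot(f) = Σ_i e^i ∧ f(e_i)`. -/
theorem multivector_of_endomorphism_eq_trace_add_rot
    {V : Type*} [AddCommGroup V] [Module ℝ V] {Q : QuadraticForm ℝ V}
    {ιI κ : Type*} [Fintype ιI] [Fintype κ] [DecidableEq ιI] [DecidableEq κ]
    (g : V → V → ℝ)
    (hg : ∀ a b, g a b = QuadraticMap.polar (⇑Q) a b / 2)
    (f : V →ₗ[ℝ] V)
    (e e' : ιI → V) (E E' : κ → V)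
    (hrecip : ∀ i j, g (e' i) (e j) = if i = j then (1 : ℝ) else 0)
    (hRecip : ∀ i j, g (E' i) (E j) = if i = j then (1 : ℝ) else 0)
    (hspan : ∀ v : V, v = ∑ i, g v (e' i) • e i)
    (hspan' : ∀ v : V, v = ∑ i, g v (e i) • e' i)
    (hSpan : ∀ v : V, v = ∑ i, g v (E' i) • E i)
    (hSpan' : ∀ v : V, v = ∑ i, g v (E i) • E' i) :
    (∑ i, ι Q (e' i) * ι Q (f (e i)) = ∑ j, ι Q (E' j) * ι Q (f (E j)))
    ∧ (∑ i, ι Q (e' i) * ι Q (f (e i))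
        = algebraMap ℝ (CliffordAlgebra Q) (∑ i, g (e' i) (f (e i)))
          + ∑ i, (1/2 : ℝ) • (ι Q (e' i) * ι Q (f (e i)) - ι Q (f (e i)) * ι Q (e' i))) := by
  have gsymm : ∀ a b, g a b = g b a := fun a b => by
    rw [hg, hg, QuadraticMap.polar_comm]
  constructor
  · calc ∑ i, ι Q (e' i) * ι Q (f (e i))
        = ∑ i, ∑ j, g (e' i) (E j) • (ι Q (E' j) * ι Q (f (e i))) := by
          refine Finset.sum_congr rfl fun i _ => ?_
          conv_lhs => rw [hSpan' (e' i)]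
          rw [map_sum, Finset.sum_mul]
          simp [smul_mul_assoc]
      _ = ∑ j, ι Q (E' j) * ι Q (f (∑ i, g (e' i) (E j) • e i)) := by
          rw [Finset.sum_comm]
          refine Finset.sum_congr rfl fun j _ => ?_
          rw [map_sum, map_sum, Finset.mul_sum]
          simp [mul_smul_comm]
      _ = ∑ j, ι Q (E' j) * ι Q (f (E j)) := by
          refine Finset.sum_congr rfl fun j _ => ?_
          congr 2
          have h : ∑ i, g (e' i) (E j) • e i = ∑ i, g (E j) (e' i) • e i := by
            simp_rw [gsymm]
          rw [h, ← hspan (E j)]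
  · have key : ∀ a b : V, ι Q a * ι Q b
        = algebraMap ℝ (CliffordAlgebra Q) (g a b)
          + (1/2 : ℝ) • (ι Q a * ι Q b - ι Q b * ι Q a) := by
      intro a b
      have h := CliffordAlgebra.ι_mul_ι_add_swap (Q := Q) a b
      have hga : algebraMap ℝ (CliffordAlgebra Q) (g a b)
          = (1/2 : ℝ) • (ι Q a * ι Q b + ι Q b * ι Q a) := by
        rw [h, hg, Algebra.algebraMap_eq_smul_one]
        rw [Algebra.algebraMap_eq_smul_one]
        rw [smul_smul]
        ring_nf
      rw [hga, ← smul_add, add_add_sub_cancel, ← two_smul ℝ, smul_smul]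
      norm_num
    calc ∑ i, ι Q (e' i) * ι Q (f (e i))
        = ∑ i, (algebraMap ℝ (CliffordAlgebra Q) (g (e' i) (f (e i)))
            + (1/2 : ℝ) • (ι Q (e' i) * ι Q (f (e i)) - ι Q (f (e i)) * ι Q (e' i))) := by
          exact Finset.sum_congr rfl fun i _ => key _ _
      _ = _ := by rw [Finset.sum_add_distrib, map_sum]
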